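/- Assume (H1) and (H2), and let l ∈ (0,h] satisfy M · l^{α+k+1-γ} · Γ(k+1)/Γ(α+k+1) ≤ b. If φ and ψ are both continuous functions on (1,1+l] satisfying |(log t)^{1-γ} φ(t) - x₀| ≤ b and |(log t)^{1-γ} ψ(t) - x₀| ≤ b for all t ∈ (1,1+l], and both satisfy the Volterra integral equation x(t) = x₀ (log t)^{γ-1} + (1/Γ(α)) ∫₁ᵗ (log(t/s))^{α-1} f(s, x(s)) ds/s on (1,1+l], then φ(t) = ψ(t) for all t ∈ (1,1+l]. -/

import Mathlib

open Real MeasureTheory intervalIntegral Set Filter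



lemma image_exp_Ioo (a c : ℝ) : Real.exp '' Ioo a c = Ioo (Real.exp a) (Real.exp c) := by
  ext x
  constructor
  · rintro ⟨u, ⟨h1, h2⟩, rfl⟩
    exact ⟨Real.exp_lt_exp.2 h1, Real.exp_lt_exp.2 h2⟩
  · rintro ⟨h1, h2⟩
    have hx : 0 < x := lt_trans (Real.exp_pos a) h1
    refine ⟨Real.log x, ⟨(Real.lt_log_iff_exp_lt hx).2 h1, ?_⟩, Real.exp_log hx⟩
    rw [← Real.log_exp c]; exact Real.log_lt_log hx h2

lemma cov_exp_int (g : ℝ → ℝ) (a c : ℝ) :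
    (∫ s in Ioo (Real.exp a) (Real.exp c), g (Real.log s) / s) = ∫ u in Ioo a c, g u := by
  rw [← _root_.image_exp_Ioo]
  rw [integral_image_eq_integral_abs_deriv_smul measurableSet_Ioo
    (fun x _ => (Real.hasDerivAt_exp x).hasDerivWithinAt) Real.exp_injective.injOn]
  apply setIntegral_congr_fun measurableSet_Ioo
  intro u _
  simp only [smul_eq_mul, Real.log_exp, abs_of_pos (Real.exp_pos u)]
  field_simp

lemma cov_exp_intble (g : ℝ → ℝ) (a c : ℝ)
    (h : IntegrableOn g (Ioo a c) volume) :
    IntegrableOn (fun s => g (Real.log s) / s) (Ioo (Real.exp a) (Real.exp c)) volume := by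
  rw [← _root_.image_exp_Ioo]
  rw [integrableOn_image_iff_integrableOn_abs_deriv_smul measurableSet_Ioo
    (fun x _ => (Real.hasDerivAt_exp x).hasDerivWithinAt) Real.exp_injective.injOn]
  apply h.congr_fun ?_ measurableSet_Ioo
  intro u _
  simp only [smul_eq_mul, Real.log_exp, abs_of_pos (Real.exp_pos u)]
  field_simp

lemma img_refl (c m : ℝ) : (fun v => c - v) '' Ioo 0 m = Ioo (c - m) c := by
  ext x
  constructor
  · rintro ⟨v, ⟨h1, h2⟩, rfl⟩
    exact ⟨by dsimp; linarith, by dsimp; linarith⟩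
  · rintro ⟨h1, h2⟩; exact ⟨c - x, ⟨by linarith, by linarith⟩, by ring⟩

lemma hd_refl (c : ℝ) : ∀ x ∈ Ioo (0:ℝ) 1000, True := fun _ _ => trivial

lemma cov_refl_int (g : ℝ → ℝ) (c m : ℝ) :
    (∫ u in Ioo (c - m) c, g (c - u)) = ∫ v in Ioo 0 m, g v := by
  have hd : ∀ x ∈ Ioo (0:ℝ) m, HasDerivWithinAt (fun v : ℝ => c - v) (-1) (Ioo 0 m) x :=
    fun x _ => by simpa using ((hasDerivAt_id x).const_sub c).hasDerivWithinAt
  have hinj : InjOn (fun v : ℝ => c - v) (Ioo 0 m) := fun x _ y _ hxy => by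
    dsimp at hxy; linarith
  rw [← img_refl, integral_image_eq_integral_abs_deriv_smul measurableSet_Ioo hd hinj]
  simp

lemma cov_refl_intble (g : ℝ → ℝ) (c m : ℝ) (h : IntegrableOn g (Ioo 0 m) volume) :
    IntegrableOn (fun u => g (c - u)) (Ioo (c - m) c) volume := by
  have hd : ∀ x ∈ Ioo (0:ℝ) m, HasDerivWithinAt (fun v : ℝ => c - v) (-1) (Ioo 0 m) x :=
    fun x _ => by simpa using ((hasDerivAt_id x).const_sub c).hasDerivWithinAt
  have hinj : InjOn (fun v : ℝ => c - v) (Ioo 0 m) := fun x _ y _ hxy => by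
    dsimp at hxy; linarith
  rw [← img_refl, integrableOn_image_iff_integrableOn_abs_deriv_smul measurableSet_Ioo hd hinj]
  simpa using h.congr_fun (fun u _ => by simp) measurableSet_Ioo


lemma int_rpow_Ioo (e m : ℝ) (he : -1 < e) (hm : 0 ≤ m) :
    IntegrableOn (fun v : ℝ => v ^ e) (Ioo 0 m) volume ∧
      (∫ v in Ioo 0 m, v ^ e) = m ^ (e + 1) / (e + 1) := by
  constructor
  · rw [← integrableOn_Ioc_iff_integrableOn_Ioo]
    have := intervalIntegral.intervalIntegrable_rpow' (a := 0) (b := m) he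
    rwa [intervalIntegrable_iff, uIoc_of_le hm] at this
  · rw [← MeasureTheory.integral_Ioc_eq_integral_Ioo, ← intervalIntegral.integral_of_le hm,
      integral_rpow (Or.inl he), Real.zero_rpow (by linarith), sub_zero]

lemma aux_cont (L a k : ℝ) : ContinuousOn (fun u : ℝ => (L - u) ^ (a - 1) * u ^ k) (Ioo 0 L) := by
  intro u hu
  apply ContinuousWithinAt.mul
  · exact ((Real.continuousAt_rpow_const (L - u) (a - 1)
      (Or.inl (by have := hu.2; intro hc; simp only [sub_eq_zero] at hc; linarith))).comp
      ((continuous_const.sub continuous_id).continuousAt)).continuousWithinAt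
  · exact (Real.continuousAt_rpow_const u k (Or.inl (ne_of_gt hu.1))).continuousWithinAt

lemma refl_rpow_Ioo (e c m : ℝ) (he : -1 < e) (hm : 0 ≤ m) :
    IntegrableOn (fun u : ℝ => (c - u) ^ e) (Ioo (c - m) c) volume ∧
      (∫ u in Ioo (c - m) c, (c - u) ^ e) = m ^ (e + 1) / (e + 1) := by
  obtain ⟨hi, hv⟩ := int_rpow_Ioo e m he hm
  exact ⟨cov_refl_intble (fun v => v ^ e) c m hi, by rw [cov_refl_int (fun v => v ^ e) c m, hv]⟩

lemma kern1 (a k : ℝ) (ha0 : 0 < a) (ha1 : a < 1) (hk : -1 < k) :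
    ∃ C : ℝ, 0 < C ∧ ∀ L : ℝ, 0 < L →
      IntegrableOn (fun u => (L - u) ^ (a - 1) * u ^ k) (Ioo 0 L) volume ∧
      (∫ u in Ioo 0 L, (L - u) ^ (a - 1) * u ^ k) ≤ C * L ^ (a + k) := by
  have h2 : (0:ℝ) < 2 := by norm_num
  have hk1 : (0:ℝ) < k + 1 := by linarith
  refine ⟨(2:ℝ) ^ (-(a+k)) / (k+1) + ((2:ℝ) ^ (-k) + 1) * 2 ^ (-a) / a,
    add_pos (div_pos (Real.rpow_pos_of_pos h2 _) hk1)
      (div_pos (mul_pos (by positivity) (Real.rpow_pos_of_pos h2 _)) ha0), ?_⟩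
  intro L hL
  have hm : (0:ℝ) < L / 2 := by linarith
  -- piece 1 : Ioc 0 (L/2)
  obtain ⟨hi1b, hv1b⟩ := int_rpow_Ioo k (L / 2) hk hm.le
  have hi1b' : IntegrableOn (fun v : ℝ => (L/2) ^ (a-1) * v ^ k) (Ioc 0 (L/2)) volume := by
    rw [integrableOn_Ioc_iff_integrableOn_Ioo]
    exact hi1b.const_mul _
  have hbd1 : ∀ u ∈ Ioc (0:ℝ) (L/2),
      (L - u) ^ (a - 1) * u ^ k ≤ (L/2) ^ (a-1) * u ^ k := by
    intro u hu
    apply mul_le_mul_of_nonneg_right _ (Real.rpow_nonneg hu.1.le k)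
    exact Real.rpow_le_rpow_of_nonpos hm (by linarith [hu.2]) (by linarith)
  have hnn1 : ∀ u ∈ Ioc (0:ℝ) (L/2), 0 ≤ (L - u) ^ (a - 1) * u ^ k := by
    intro u hu
    exact mul_nonneg (Real.rpow_nonneg (by linarith [hu.2, hu.1]) _) (Real.rpow_nonneg hu.1.le _)
  have hsub1 : Ioc (0:ℝ) (L/2) ⊆ Ioo 0 L := fun u hu => ⟨hu.1, by linarith [hu.2]⟩
  have hi1 : IntegrableOn (fun u => (L - u) ^ (a - 1) * u ^ k) (Ioc 0 (L/2)) volume := by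
    apply hi1b'.mono' (((aux_cont L a k).mono hsub1).aestronglyMeasurable measurableSet_Ioc)
    filter_upwards [ae_restrict_of_forall_mem measurableSet_Ioc hbd1,
      ae_restrict_of_forall_mem measurableSet_Ioc hnn1] with u h1 h2
    rwa [Real.norm_eq_abs, abs_of_nonneg h2]
  have hv1 : (∫ u in Ioc 0 (L/2), (L - u) ^ (a - 1) * u ^ k)
      ≤ (L/2) ^ (a-1) * ((L/2) ^ (k+1) / (k+1)) := by
    calc (∫ u in Ioc 0 (L/2), (L - u) ^ (a - 1) * u ^ k)
        ≤ ∫ u in Ioc 0 (L/2), (L/2) ^ (a-1) * u ^ k :=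
          setIntegral_mono_on hi1 hi1b' measurableSet_Ioc hbd1
      _ = (L/2) ^ (a-1) * ∫ u in Ioc 0 (L/2), u ^ k := integral_const_mul _ _
      _ = (L/2) ^ (a-1) * ((L/2) ^ (k+1) / (k+1)) := by
          rw [MeasureTheory.integral_Ioc_eq_integral_Ioo, hv1b]
  -- piece 2 : Ioo (L/2) L
  obtain ⟨hi2i, hv2i⟩ := int_rpow_Ioo (a-1) (L/2) (by linarith) hm.le
  have hi2b0 : IntegrableOn (fun u : ℝ => (L - u) ^ (a-1)) (Ioo (L/2) L) volume := by
    have := cov_refl_intble (fun v => v ^ (a-1)) L (L/2) hi2i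
    have hLL : L - L / 2 = L / 2 := by ring
    rwa [hLL] at this
  have hv2b0 : (∫ u in Ioo (L/2) L, (L - u) ^ (a-1)) = (L/2) ^ a / a := by
    have := cov_refl_int (fun v => v ^ (a-1)) L (L/2)
    have hLL : L - L / 2 = L / 2 := by ring
    rw [hLL] at this
    rw [this, hv2i]
    ring_nf
  have hi2b : IntegrableOn (fun u : ℝ => ((L/2) ^ k + L ^ k) * (L - u) ^ (a-1))
      (Ioo (L/2) L) volume := hi2b0.const_mul _
  have hbd2 : ∀ u ∈ Ioo (L/2) L,
      (L - u) ^ (a - 1) * u ^ k ≤ ((L/2) ^ k + L ^ k) * (L - u) ^ (a-1) := by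
    intro u hu
    rw [mul_comm]
    apply mul_le_mul_of_nonneg_right _ (Real.rpow_nonneg (by linarith [hu.2]) _)
    rcases le_or_gt 0 k with hk0 | hk0
    · calc u ^ k ≤ L ^ k := Real.rpow_le_rpow (by linarith [hu.1]) hu.2.le hk0
        _ ≤ (L/2) ^ k + L ^ k := by
            have : (0:ℝ) ≤ (L/2) ^ k := Real.rpow_nonneg hm.le _
            linarith
    · calc u ^ k ≤ (L/2) ^ k := Real.rpow_le_rpow_of_nonpos hm hu.1.le hk0.le
        _ ≤ (L/2) ^ k + L ^ k := by
            have : (0:ℝ) ≤ L ^ k := Real.rpow_nonneg hL.le _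
            linarith
  have hnn2 : ∀ u ∈ Ioo (L/2) L, 0 ≤ (L - u) ^ (a - 1) * u ^ k := by
    intro u hu
    exact mul_nonneg (Real.rpow_nonneg (by linarith [hu.2]) _)
      (Real.rpow_nonneg (by linarith [hu.1]) _)
  have hsub2 : Ioo (L/2) L ⊆ Ioo 0 L := fun u hu => ⟨by linarith [hu.1], hu.2⟩
  have hi2 : IntegrableOn (fun u => (L - u) ^ (a - 1) * u ^ k) (Ioo (L/2) L) volume := by
    apply hi2b.mono' (((aux_cont L a k).mono hsub2).aestronglyMeasurable measurableSet_Ioo)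
    filter_upwards [ae_restrict_of_forall_mem measurableSet_Ioo hbd2,
      ae_restrict_of_forall_mem measurableSet_Ioo hnn2] with u h1 h2
    rwa [Real.norm_eq_abs, abs_of_nonneg h2]
  have hv2 : (∫ u in Ioo (L/2) L, (L - u) ^ (a - 1) * u ^ k)
      ≤ ((L/2) ^ k + L ^ k) * ((L/2) ^ a / a) := by
    calc (∫ u in Ioo (L/2) L, (L - u) ^ (a - 1) * u ^ k)
        ≤ ∫ u in Ioo (L/2) L, ((L/2) ^ k + L ^ k) * (L - u) ^ (a-1) :=
          setIntegral_mono_on hi2 hi2b measurableSet_Ioo hbd2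
      _ = ((L/2) ^ k + L ^ k) * ∫ u in Ioo (L/2) L, (L - u) ^ (a-1) := integral_const_mul _ _
      _ = ((L/2) ^ k + L ^ k) * ((L/2) ^ a / a) := by rw [hv2b0]
  -- combine
  have hsplit : Ioo (0:ℝ) L = Ioc 0 (L/2) ∪ Ioo (L/2) L := by
    ext u
    simp only [mem_Ioo, mem_Ioc, mem_union]
    constructor
    · rintro ⟨h1, h2'⟩
      rcases le_or_gt u (L/2) with h | h
      · exact Or.inl ⟨h1, h⟩
      · exact Or.inr ⟨h, h2'⟩
    · rintro (⟨h1, h2'⟩ | ⟨h1, h2'⟩) <;> constructor <;> linarith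
  have hdisj : Disjoint (Ioc (0:ℝ) (L/2)) (Ioo (L/2) L) := by
    rw [Set.disjoint_left]
    rintro u ⟨_, h2'⟩ ⟨h3, _⟩
    linarith
  constructor
  · rw [hsplit]; exact hi1.union hi2
  · rw [hsplit, setIntegral_union hdisj measurableSet_Ioo hi1 hi2]
    have e2 : ∀ x : ℝ, (L/2 : ℝ) ^ x = L ^ x * 2 ^ (-x) := by
      intro x
      rw [div_eq_mul_inv, Real.mul_rpow hL.le (by norm_num),
        Real.inv_rpow (by norm_num), ← Real.rpow_neg (by norm_num)]
    have key : (L/2) ^ (a-1) * ((L/2) ^ (k+1) / (k+1)) + ((L/2) ^ k + L ^ k) * ((L/2) ^ a / a)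
        ≤ ((2:ℝ) ^ (-(a+k)) / (k+1) + ((2:ℝ) ^ (-k) + 1) * 2 ^ (-a) / a) * L ^ (a + k) := by
      have e1 : (L/2) ^ (a-1) * (L/2) ^ (k+1) = (L/2) ^ (a+k) := by
        rw [← Real.rpow_add hm]; ring_nf
      rw [mul_div_assoc', e1, e2 (a+k), e2 k, e2 a]
      have e5 : L ^ a * L ^ k = L ^ (a + k) := (Real.rpow_add hL a k).symm
      calc L ^ (a+k) * 2 ^ (-(a+k)) / (k+1) + (L ^ k * 2 ^ (-k) + L ^ k) * (L ^ a * 2 ^ (-a) / a)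
          = (2:ℝ) ^ (-(a+k)) / (k+1) * L ^ (a+k)
            + ((2:ℝ) ^ (-k) + 1) * 2 ^ (-a) / a * (L ^ a * L ^ k) := by ring
        _ = ((2:ℝ) ^ (-(a+k)) / (k+1) + ((2:ℝ) ^ (-k) + 1) * 2 ^ (-a) / a) * L ^ (a + k) := by
            rw [e5]; ring
        _ ≤ _ := le_refl _
    calc _ ≤ (L/2) ^ (a-1) * ((L/2) ^ (k+1) / (k+1)) + ((L/2) ^ k + L ^ k) * ((L/2) ^ a / a) :=
          add_le_add hv1 hv2
      _ ≤ _ := key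

lemma kern_s (a k : ℝ) (ha0 : 0 < a) (ha1 : a < 1) (hk : -1 < k) :
    ∃ C : ℝ, 0 < C ∧ ∀ t : ℝ, 1 < t →
      IntegrableOn (fun s => Real.log (t/s) ^ (a-1) * Real.log s ^ k / s) (Ioo 1 t) volume ∧
      (∫ s in Ioo 1 t, Real.log (t/s) ^ (a-1) * Real.log s ^ k / s)
        ≤ C * Real.log t ^ (a+k) := by
  obtain ⟨C, hC, hC2⟩ := kern1 a k ha0 ha1 hk
  refine ⟨C, hC, ?_⟩
  intro t ht
  have ht0 : (0:ℝ) < t := by linarith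
  have hL : 0 < Real.log t := Real.log_pos ht
  obtain ⟨hKi, hKv⟩ := hC2 (Real.log t) hL
  set L := Real.log t with hLdef
  have himg : Ioo (1:ℝ) t = Ioo (Real.exp 0) (Real.exp L) := by
    rw [Real.exp_zero, Real.exp_log ht0]
  have hcongr : ∀ s ∈ Ioo (1:ℝ) t,
      Real.log (t/s) ^ (a-1) * Real.log s ^ k / s
        = (fun u => (L - u) ^ (a-1) * u ^ k) (Real.log s) / s := by
    intro s hs
    have hs0 : (0:ℝ) < s := by linarith [hs.1]
    rw [Real.log_div (ne_of_gt ht0) (ne_of_gt hs0)]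
  constructor
  · rw [himg]
    apply ((cov_exp_intble (fun u => (L - u) ^ (a-1) * u ^ k) 0 L hKi).congr_fun ?_
      measurableSet_Ioo)
    intro s hs
    rw [← himg] at hs
    exact (hcongr s hs).symm
  · calc (∫ s in Ioo 1 t, Real.log (t/s) ^ (a-1) * Real.log s ^ k / s)
        = ∫ s in Ioo (Real.exp 0) (Real.exp L),
            (fun u => (L - u) ^ (a-1) * u ^ k) (Real.log s) / s := by
          rw [← himg]
          exact setIntegral_congr_fun measurableSet_Ioo hcongr
      _ = ∫ u in Ioo 0 L, (L - u) ^ (a-1) * u ^ k := cov_exp_int (fun u => (L - u) ^ (a-1) * u ^ k) 0 L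
      _ ≤ C * L ^ (a+k) := hKv

lemma kern2 (a : ℝ) (ha0 : 0 < a) (ha1 : a < 1) (σ t : ℝ) (hσ : 1 ≤ σ) (hlt : σ < t) :
    IntegrableOn (fun s => Real.log (t/s) ^ (a-1) / s) (Ioo σ t) volume ∧
      (∫ s in Ioo σ t, Real.log (t/s) ^ (a-1) / s) = Real.log (t/σ) ^ a / a := by
  have hσ0 : (0:ℝ) < σ := by linarith
  have ht0 : (0:ℝ) < t := by linarith
  set S := Real.log σ with hS
  set L := Real.log t with hL
  have hSL : S < L := Real.log_lt_log hσ0 hlt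
  have hS0 : 0 ≤ S := Real.log_nonneg hσ
  obtain ⟨hri, hrv⟩ := refl_rpow_Ioo (a-1) L (L - S) (by linarith) (by linarith)
  have hE : L - (L - S) = S := by ring
  rw [hE] at hri hrv
  have himg : Ioo σ t = Ioo (Real.exp S) (Real.exp L) := by
    rw [Real.exp_log hσ0, Real.exp_log ht0]
  have hcongr : ∀ s ∈ Ioo σ t,
      Real.log (t/s) ^ (a-1) / s = (fun u => (L - u) ^ (a-1)) (Real.log s) / s := by
    intro s hs
    have hs0 : (0:ℝ) < s := by linarith [hs.1]
    rw [Real.log_div (ne_of_gt ht0) (ne_of_gt hs0)]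
  have hts : Real.log (t/σ) = L - S := Real.log_div (ne_of_gt ht0) (ne_of_gt hσ0)
  constructor
  · rw [himg]
    apply ((cov_exp_intble (fun u => (L - u) ^ (a-1)) S L hri).congr_fun ?_ measurableSet_Ioo)
    intro s hs
    rw [← himg] at hs
    exact (hcongr s hs).symm
  · calc (∫ s in Ioo σ t, Real.log (t/s) ^ (a-1) / s)
        = ∫ s in Ioo (Real.exp S) (Real.exp L),
            (fun u => (L - u) ^ (a-1)) (Real.log s) / s := by
          rw [← himg]
          exact setIntegral_congr_fun measurableSet_Ioo hcongr
      _ = ∫ u in Ioo S L, (L - u) ^ (a-1) := cov_exp_int (fun u => (L - u) ^ (a-1)) S L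
      _ = Real.log (t/σ) ^ a / a := by rw [hrv, hts]; ring_nf

lemma aemeas_piecewise {μ : Measure ℝ} {F : ℝ → ℝ → ℝ} {u : ℝ → ℝ} (hu : Measurable u)
    (hc : (Set.range u).Countable)
    (hF : ∀ r ∈ Set.range u, AEMeasurable (fun s => F s r) μ) :
    AEMeasurable (fun s => F s (u s)) μ := by
  have : Countable ↥(Set.range u) := hc.to_subtype
  have hU : (⋃ r : Set.range u, u ⁻¹' {(r : ℝ)}) = Set.univ := by
    ext s
    simp only [Set.mem_iUnion, Set.mem_preimage, Set.mem_singleton_iff, Set.mem_univ, iff_true]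
    exact ⟨⟨u s, ⟨s, rfl⟩⟩, rfl⟩
  have hmain := (aemeasurable_iUnion_iff (μ := μ)
    (s := fun r : Set.range u => u ⁻¹' {(r : ℝ)}) (f := fun s => F s (u s))).mpr ?_
  · rwa [hU, Measure.restrict_univ] at hmain
  · intro r
    have h1 : AEMeasurable (fun s => F s (r : ℝ)) (μ.restrict (u ⁻¹' {(r : ℝ)})) :=
      (hF r r.2).mono_measure Measure.restrict_le_self
    apply h1.congr
    refine ae_restrict_of_forall_mem (hu (measurableSet_singleton _)) ?_
    intro s hs
    simp only [Set.mem_preimage, Set.mem_singleton_iff] at hs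
    dsimp only
    rw [hs]

lemma caratheodory_comp {F : ℝ → ℝ → ℝ} {x : ℝ → ℝ} {lo hi : ℝ} {I : Set ℝ}
    (hI : MeasurableSet I) (hlohi : lo < hi)
    (hFc : ∀ s ∈ I, ContinuousOn (fun y => F s y) (Icc lo hi))
    (hFm : ∀ y ∈ Icc lo hi, AEMeasurable (fun s => F s y) (volume.restrict I))
    (hx : AEMeasurable x (volume.restrict I))
    (hxm : ∀ s ∈ I, x s ∈ Icc lo hi) :
    AEMeasurable (fun s => F s (x s)) (volume.restrict I) := by
  set μ := volume.restrict I with hμ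
  set c : ℝ → ℝ := fun s => max lo (min hi (x s)) with hc
  have hcae : AEMeasurable c μ :=
    aemeasurable_const.max (aemeasurable_const.min hx)
  set v : ℝ → ℝ := fun s => max lo (min hi (hcae.mk c s)) with hv
  have hvmeas : Measurable v :=
    measurable_const.max (measurable_const.min hcae.measurable_mk)
  have hvIcc : ∀ s, v s ∈ Icc lo hi := fun s =>
    ⟨le_max_left _ _, max_le hlohi.le (min_le_left _ _)⟩
  have hveq : ∀ᵐ s ∂μ, v s = x s := by
    filter_upwards [hcae.ae_eq_mk, ae_restrict_mem hI] with s hs hsI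
    have hx1 := hxm s hsI
    have e1 : hi ⊓ x s = x s := inf_eq_right.2 hx1.2
    have e2 : lo ⊔ x s = x s := sup_eq_right.2 hx1.1
    rw [hv]
    dsimp only
    rw [← hs]
    show lo ⊔ (hi ⊓ (lo ⊔ (hi ⊓ x s))) = x s
    rw [e1, e2, e1, e2]
  -- grid approximations
  set u : ℕ → ℝ → ℝ := fun n s =>
    lo + (hi - lo) * (⌊(v s - lo) / (hi - lo) * (n + 1)⌋ : ℝ) / (n + 1) with hudef
  have hlh : (0:ℝ) < hi - lo := by linarith
  have humeas : ∀ n, Measurable (u n) := by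
    intro n
    apply measurable_const.add
    apply Measurable.div ?_ measurable_const
    apply measurable_const.mul
    have h1 : Measurable fun s => ⌊(v s - lo) / (hi - lo) * ((n : ℝ) + 1)⌋ :=
      Int.measurable_floor.comp (((hvmeas.sub measurable_const).div_const _).mul_const _)
    exact (measurable_from_top (f := (Int.cast : ℤ → ℝ))).comp h1
  have hurange : ∀ n, (Set.range (u n)).Countable := by
    intro n
    have : Set.range (u n) ⊆ Set.range (fun j : ℤ => lo + (hi - lo) * (j : ℝ) / (n + 1)) := by
      rintro y ⟨s, rfl⟩
      exact ⟨⌊(v s - lo) / (hi - lo) * (n + 1)⌋, rfl⟩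
    exact Set.Countable.mono this (Set.countable_range _)
  have hn1 : ∀ n : ℕ, (0:ℝ) < (n:ℝ) + 1 := fun n => by positivity
  have huIcc : ∀ n s, u n s ∈ Icc lo hi := by
    intro n s
    have h1 := hvIcc s
    set y := (v s - lo) / (hi - lo) with hy
    have hy0 : 0 ≤ y := div_nonneg (by linarith [h1.1]) hlh.le
    have hy1 : y ≤ 1 := (div_le_one hlh).2 (by linarith [h1.2])
    have hf0 : (0:ℤ) ≤ ⌊y * (n + 1)⌋ := Int.floor_nonneg.2 (by positivity)
    have hfle : (⌊y * (n + 1)⌋ : ℝ) ≤ y * (n + 1) := Int.floor_le _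
    constructor
    · have : (0:ℝ) ≤ (hi - lo) * (⌊y * (n + 1)⌋ : ℝ) / (n + 1) := by
        apply div_nonneg _ (hn1 n).le
        exact mul_nonneg hlh.le (by exact_mod_cast hf0)
      simpa [hudef] using by linarith
    · have : (hi - lo) * (⌊y * (n + 1)⌋ : ℝ) / (n + 1) ≤ (hi - lo) * y := by
        rw [div_le_iff₀ (hn1 n)]
        calc (hi - lo) * (⌊y * (n + 1)⌋ : ℝ) ≤ (hi - lo) * (y * (n + 1)) :=
              mul_le_mul_of_nonneg_left hfle hlh.le
          _ = (hi - lo) * y * (n + 1) := by ring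
      have h2 : (hi - lo) * y = v s - lo := by
        rw [hy]; field_simp [hlh.ne']
      simp only [hudef]
      have := h1.2
      linarith [this]
  have huconv : ∀ s, Filter.Tendsto (fun n => u n s) atTop (nhds (v s)) := by
    intro s
    have h1 := hvIcc s
    set y := (v s - lo) / (hi - lo) with hy
    have h2 : ∀ n : ℕ, v s - (hi - lo) / (n + 1) ≤ u n s := by
      intro n
      have hfl : y * (n + 1) - 1 ≤ (⌊y * (n + 1)⌋ : ℝ) := by
        linarith [Int.sub_one_lt_floor (y * (n + 1))]
      have h3 : (hi - lo) * (y * (n+1) - 1) / (n + 1) ≤ (hi - lo) * (⌊y * (n + 1)⌋ : ℝ) / (n+1) := by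
        gcongr
      have h4 : (hi - lo) * y = v s - lo := by rw [hy]; field_simp [hlh.ne']
      have h5 : (hi - lo) * (y * (n+1) - 1) / (n + 1) = (hi - lo) * y - (hi - lo)/(n+1) := by
        field_simp
      simp only [hudef]
      rw [h5, h4] at h3
      linarith
    have h6 : ∀ n : ℕ, u n s ≤ v s := by
      intro n
      have h4 : (hi - lo) * y = v s - lo := by rw [hy]; field_simp [hlh.ne']
      have : (hi - lo) * (⌊y * (n + 1)⌋ : ℝ) / (n + 1) ≤ (hi - lo) * y := by
        rw [div_le_iff₀ (hn1 n)]
        calc (hi - lo) * (⌊y * (n + 1)⌋ : ℝ) ≤ (hi - lo) * (y * (n + 1)) :=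
              mul_le_mul_of_nonneg_left (Int.floor_le _) hlh.le
          _ = (hi - lo) * y * (n + 1) := by ring
      simp only [hudef]
      rw [h4] at this
      linarith
    have hlow : Filter.Tendsto (fun n : ℕ => v s - (hi - lo) / (n + 1)) atTop (nhds (v s)) := by
      have h0 : Filter.Tendsto (fun n : ℕ => (hi - lo) / ((n : ℝ) + 1)) atTop (nhds 0) := by
        have := tendsto_one_div_add_atTop_nhds_zero_nat.const_mul (hi - lo)
        simpa [mul_one_div, div_eq_mul_inv] using this
      simpa using (tendsto_const_nhds (x := v s)).sub h0
    exact tendsto_of_tendsto_of_tendsto_of_le_of_le hlow tendsto_const_nhds h2 h6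
  apply aemeasurable_of_tendsto_metrizable_ae' (f := fun n s => F s (u n s))
  · intro n
    apply aemeas_piecewise (humeas n) (hurange n)
    rintro r ⟨s, rfl⟩
    exact hFm _ (huIcc n s)
  · filter_upwards [hveq, ae_restrict_mem hI] with s hs hsI
    have hcont := (hFc s hsI (x s) (hxm s hsI)).tendsto
    apply hcont.comp
    rw [tendsto_nhdsWithin_iff]
    constructor
    · rw [← hs]; exact huconv s
    · exact Filter.Eventually.of_forall (fun n => huIcc n s)

theorem volterra_solution_unique (α β γ x₀ h b M k : ℝ) (f : ℝ → ℝ → ℝ)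
    (hα0 : 0 < α) (hα1 : α < 1) (hβ0 : 0 ≤ β) (hβ1 : β ≤ 1)
    (hγ : γ = α + β * (1 - α))
    (hh : 0 < h) (hb : 0 < b) (hM : 0 ≤ M) (hk : β * (1 - α) - 1 < k)
    (H1cont : ∀ t ∈ Set.Ioc (1:ℝ) (1 + h),
      ContinuousOn (fun x : ℝ => f t (Real.log t ^ (γ - 1) * x)) (Set.Icc (x₀ - b) (x₀ + b)))
    (H1meas : ∀ x ∈ Set.Icc (x₀ - b) (x₀ + b),
      AEMeasurable (fun t : ℝ => f t (Real.log t ^ (γ - 1) * x))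
        (MeasureTheory.volume.restrict (Set.Ioc (1:ℝ) (1 + h))))
    (H1bdd : ∀ t ∈ Set.Ioc (1:ℝ) (1 + h), ∀ x ∈ Set.Icc (x₀ - b) (x₀ + b),
      |f t (Real.log t ^ (γ - 1) * x)| ≤ M * Real.log t ^ k)
    (A : ℝ) (hA : 0 < A)
    (H2 : ∀ t ∈ Set.Ioc (1:ℝ) (1 + h), ∀ x₁ ∈ Set.Icc (x₀ - b) (x₀ + b),
      ∀ x₂ ∈ Set.Icc (x₀ - b) (x₀ + b),
      |f t (Real.log t ^ (γ - 1) * x₁) - f t (Real.log t ^ (γ - 1) * x₂)|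
        ≤ A * Real.log t ^ k * |x₁ - x₂|)
    (l : ℝ) (hl0 : 0 < l) (hlh : l ≤ h)
    (hlb : M * l ^ (α + k + 1 - γ) * (Real.Gamma (k + 1) / Real.Gamma (α + k + 1)) ≤ b)
    (φ ψ : ℝ → ℝ)
    (hφc : ContinuousOn φ (Set.Ioc 1 (1 + l))) (hψc : ContinuousOn ψ (Set.Ioc 1 (1 + l)))
    (hφb : ∀ t ∈ Set.Ioc (1:ℝ) (1 + l), |Real.log t ^ (1 - γ) * φ t - x₀| ≤ b)
    (hψb : ∀ t ∈ Set.Ioc (1:ℝ) (1 + l), |Real.log t ^ (1 - γ) * ψ t - x₀| ≤ b)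
    (hφ : ∀ t ∈ Set.Ioc (1:ℝ) (1 + l),
      φ t = x₀ * Real.log t ^ (γ - 1) +
        (1 / Real.Gamma α) * ∫ s in (1:ℝ)..t, Real.log (t / s) ^ (α - 1) * f s (φ s) / s)
    (hψ : ∀ t ∈ Set.Ioc (1:ℝ) (1 + l),
      ψ t = x₀ * Real.log t ^ (γ - 1) +
        (1 / Real.Gamma α) * ∫ s in (1:ℝ)..t, Real.log (t / s) ^ (α - 1) * f s (ψ s) / s) :
    ∀ t ∈ Set.Ioc (1:ℝ) (1 + l), φ t = ψ t := by
  -- basic facts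
  have hγ1 : γ ≤ 1 := by nlinarith
  have hγ0 : 0 < γ := by nlinarith
  have hk' : (-1:ℝ) < k := by nlinarith
  have hδ : 0 < α + k + 1 - γ := by nlinarith
  set δ := α + k + 1 - γ with hδdef
  have hΓ : 0 < Real.Gamma α := Real.Gamma_pos_of_pos hα0
  obtain ⟨C, hC, hCk⟩ := kern_s α k hα0 hα1 hk'
  have hl1 : (1:ℝ) < 1 + l := by linarith
  have hlh' : (1:ℝ) + l ≤ 1 + h := by linarith
  have hsubIoc : Set.Ioc (1:ℝ) (1 + l) ⊆ Set.Ioc (1:ℝ) (1 + h) :=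
    fun s hs => ⟨hs.1, le_trans hs.2 hlh'⟩
  have cancel : ∀ s : ℝ, 1 < s → ∀ y : ℝ,
      Real.log s ^ (γ - 1) * (Real.log s ^ (1 - γ) * y) = y := by
    intro s hs y
    rw [← mul_assoc, ← Real.rpow_add (Real.log_pos hs),
      show (γ - 1) + (1 - γ) = 0 by ring, Real.rpow_zero, one_mul]
  have hIccmem : ∀ (χ : ℝ → ℝ),
      (∀ s ∈ Set.Ioc (1:ℝ) (1 + l), |Real.log s ^ (1 - γ) * χ s - x₀| ≤ b) →
      ∀ s ∈ Set.Ioc (1:ℝ) (1 + l),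
        Real.log s ^ (1 - γ) * χ s ∈ Set.Icc (x₀ - b) (x₀ + b) := by
    intro χ hχb s hs
    have := abs_le.1 (hχb s hs)
    exact ⟨by linarith [this.1], by linarith [this.2]⟩
  -- measurability of s ↦ f s (χ s)
  have fmeas : ∀ χ : ℝ → ℝ, ContinuousOn χ (Set.Ioc 1 (1 + l)) →
      (∀ s ∈ Set.Ioc (1:ℝ) (1 + l), |Real.log s ^ (1 - γ) * χ s - x₀| ≤ b) →
      ∀ t ∈ Set.Ioc (1:ℝ) (1 + l),
        AEMeasurable (fun s => f s (χ s)) (volume.restrict (Ioo 1 t)) := by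
    intro χ hχc hχb t ht
    have hsub : Ioo (1:ℝ) t ⊆ Set.Ioc 1 (1 + l) := fun s hs => ⟨hs.1, le_trans hs.2.le ht.2⟩
    have hsub2 : Ioo (1:ℝ) t ⊆ Set.Ioc 1 (1 + h) := fun s hs => hsubIoc (hsub hs)
    have hxc : ContinuousOn (fun s => Real.log s ^ (1 - γ) * χ s) (Ioo 1 t) := by
      apply ContinuousOn.mul _ (hχc.mono hsub)
      intro s hs
      exact ((Real.continuousAt_rpow_const (Real.log s) (1 - γ)
        (Or.inl (ne_of_gt (Real.log_pos hs.1)))).comp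
        (Real.continuousAt_log (by linarith [hs.1]))).continuousWithinAt
    have hFc' : ∀ s ∈ Ioo (1:ℝ) t,
        ContinuousOn (fun y => f s (Real.log s ^ (γ - 1) * y)) (Icc (x₀ - b) (x₀ + b)) :=
      fun s hs => H1cont s (hsub2 hs)
    have hFm' : ∀ y ∈ Icc (x₀ - b) (x₀ + b),
        AEMeasurable (fun s => f s (Real.log s ^ (γ - 1) * y)) (volume.restrict (Ioo 1 t)) :=
      fun y hy => (H1meas y hy).mono_measure
        (Measure.restrict_mono (fun s hs => hsub2 hs) le_rfl)
    have hxm' : ∀ s ∈ Ioo (1:ℝ) t,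
        (fun s' => Real.log s' ^ (1 - γ) * χ s') s ∈ Icc (x₀ - b) (x₀ + b) :=
      fun s hs => hIccmem χ hχb s (hsub hs)
    have hmain := caratheodory_comp (F := fun s' y => f s' (Real.log s' ^ (γ - 1) * y))
      (x := fun s' => Real.log s' ^ (1 - γ) * χ s') (I := Ioo 1 t)
      measurableSet_Ioo (by linarith : x₀ - b < x₀ + b) hFc' hFm'
      (hxc.aemeasurable measurableSet_Ioo) hxm'
    apply hmain.congr
    apply ae_restrict_of_forall_mem measurableSet_Ioo
    intro s hs
    dsimp only
    rw [cancel s hs.1]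
  -- integrability of the full integrand
  have intble : ∀ χ : ℝ → ℝ, ContinuousOn χ (Set.Ioc 1 (1 + l)) →
      (∀ s ∈ Set.Ioc (1:ℝ) (1 + l), |Real.log s ^ (1 - γ) * χ s - x₀| ≤ b) →
      ∀ t ∈ Set.Ioc (1:ℝ) (1 + l),
        IntegrableOn (fun s => Real.log (t / s) ^ (α - 1) * f s (χ s) / s)
          (Ioo 1 t) volume := by
    intro χ hχc hχb t ht
    have h1t : (1:ℝ) < t := ht.1
    have hsub : Ioo (1:ℝ) t ⊆ Set.Ioc 1 (1 + l) := fun s hs => ⟨hs.1, le_trans hs.2.le ht.2⟩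
    have hKc : ContinuousOn (fun s => Real.log (t / s) ^ (α - 1)) (Ioo 1 t) := by
      intro s hs
      have hs0 : (0:ℝ) < s := by linarith [hs.1]
      have hts : 1 < t / s := (one_lt_div hs0).2 hs.2
      have hdiv : ContinuousAt (fun x : ℝ => t / x) s :=
        continuousAt_const.div continuousAt_id (ne_of_gt hs0)
      have hc1 : ContinuousAt (fun x : ℝ => Real.log (t / x)) s :=
        (Real.continuousAt_log (by positivity)).comp hdiv
      exact (hc1.rpow_const (Or.inl (ne_of_gt (Real.log_pos hts)))).continuousWithinAt
    have hams : AEStronglyMeasurable (fun s => Real.log (t / s) ^ (α - 1) * f s (χ s) / s)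
        (volume.restrict (Ioo 1 t)) := by
      apply AEMeasurable.aestronglyMeasurable
      exact ((hKc.aemeasurable measurableSet_Ioo).mul
        (fmeas χ hχc hχb t ht)).div (measurable_id.aemeasurable)
    apply Integrable.mono' (((hCk t h1t).1).const_mul M) hams
    apply ae_restrict_of_forall_mem measurableSet_Ioo
    intro s hs
    have hs0 : (0:ℝ) < s := by linarith [hs.1]
    have hts : 1 < t / s := (one_lt_div hs0).2 hs.2
    have hK0 : 0 ≤ Real.log (t / s) ^ (α - 1) := Real.rpow_nonneg (Real.log_pos hts).le _
    have hfb : |f s (χ s)| ≤ M * Real.log s ^ k := by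
      have := H1bdd s (hsubIoc (hsub hs)) _ (hIccmem χ hχb s (hsub hs))
      rwa [cancel s hs.1] at this
    rw [Real.norm_eq_abs, abs_div, abs_of_pos hs0, abs_mul, abs_of_nonneg hK0]
    have h2 : Real.log (t / s) ^ (α - 1) * |f s (χ s)|
        ≤ Real.log (t / s) ^ (α - 1) * (M * Real.log s ^ k) :=
      mul_le_mul_of_nonneg_left hfb hK0
    calc Real.log (t / s) ^ (α - 1) * |f s (χ s)| / s
        ≤ Real.log (t / s) ^ (α - 1) * (M * Real.log s ^ k) / s := by
          rw [div_eq_mul_inv, div_eq_mul_inv]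
          exact mul_le_mul_of_nonneg_right h2 (inv_nonneg.2 hs0.le)
      _ = M * (Real.log (t / s) ^ (α - 1) * Real.log s ^ k / s) := by ring
  -- representation of the difference
  have hrep : ∀ t ∈ Set.Ioc (1:ℝ) (1 + l),
      φ t - ψ t = (1 / Real.Gamma α) *
        ∫ s in Ioo 1 t, (Real.log (t / s) ^ (α - 1) * f s (φ s) / s
          - Real.log (t / s) ^ (α - 1) * f s (ψ s) / s) := by
    intro t ht
    have e1 : (∫ s in (1:ℝ)..t, Real.log (t / s) ^ (α - 1) * f s (φ s) / s)
        = ∫ s in Ioo 1 t, Real.log (t / s) ^ (α - 1) * f s (φ s) / s := by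
      rw [intervalIntegral.integral_of_le ht.1.le, MeasureTheory.integral_Ioc_eq_integral_Ioo]
    have e2 : (∫ s in (1:ℝ)..t, Real.log (t / s) ^ (α - 1) * f s (ψ s) / s)
        = ∫ s in Ioo 1 t, Real.log (t / s) ^ (α - 1) * f s (ψ s) / s := by
      rw [intervalIntegral.integral_of_le ht.1.le, MeasureTheory.integral_Ioc_eq_integral_Ioo]
    rw [hφ t ht, hψ t ht, e1, e2,
      integral_sub (intble φ hφc hφb t ht) (intble ψ hψc hψb t ht)]
    ring
  have dom : ∀ t ∈ Set.Ioc (1:ℝ) (1 + l), ∀ G : ℝ → ℝ,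
      IntegrableOn G (Ioo 1 t) volume →
      (∀ s ∈ Ioo (1:ℝ) t,
        |Real.log (t / s) ^ (α - 1) * f s (φ s) / s
          - Real.log (t / s) ^ (α - 1) * f s (ψ s) / s| ≤ G s) →
      |φ t - ψ t| ≤ (1 / Real.Gamma α) * ∫ s in Ioo 1 t, G s := by
    intro t ht G hGi hGb
    have hΓ' : (0:ℝ) < 1 / Real.Gamma α := by
      apply div_pos one_pos hΓ
    rw [hrep t ht, abs_mul, abs_of_pos hΓ']
    apply mul_le_mul_of_nonneg_left _ hΓ'.le
    rw [← Real.norm_eq_abs]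
    apply MeasureTheory.norm_integral_le_of_norm_le hGi
    filter_upwards [ae_restrict_mem measurableSet_Ioo] with s hs
    rw [Real.norm_eq_abs]
    exact hGb s hs
  -- the Lipschitz bound from H2
  have hdiff : ∀ t ∈ Set.Ioc (1:ℝ) (1 + l), ∀ s ∈ Ioo (1:ℝ) t,
      |Real.log (t / s) ^ (α - 1) * f s (φ s) / s - Real.log (t / s) ^ (α - 1) * f s (ψ s) / s|
        ≤ Real.log (t / s) ^ (α - 1) / s *
            (A * Real.log s ^ k * (Real.log s ^ (1 - γ) * |φ s - ψ s|)) := by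
    intro t ht s hs
    have hs1 : s ∈ Set.Ioc (1:ℝ) (1 + l) := ⟨hs.1, le_trans hs.2.le ht.2⟩
    have hs0 : (0:ℝ) < s := lt_trans one_pos hs.1
    have hts : 1 < t / s := (one_lt_div hs0).2 hs.2
    have hK0 : 0 ≤ Real.log (t / s) ^ (α - 1) := Real.rpow_nonneg (Real.log_pos hts).le _
    have hfd : |f s (φ s) - f s (ψ s)|
        ≤ A * Real.log s ^ k * (Real.log s ^ (1 - γ) * |φ s - ψ s|) := by
      have h2 := H2 s (hsubIoc hs1) _ (hIccmem φ hφb s hs1) _ (hIccmem ψ hψb s hs1)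
      rw [cancel s hs.1, cancel s hs.1] at h2
      have e3 : |Real.log s ^ (1 - γ) * φ s - Real.log s ^ (1 - γ) * ψ s|
          = Real.log s ^ (1 - γ) * |φ s - ψ s| := by
        rw [← mul_sub, abs_mul, abs_of_nonneg (Real.rpow_nonneg (Real.log_pos hs.1).le _)]
      rw [e3] at h2
      exact h2
    have e4 : Real.log (t / s) ^ (α - 1) * f s (φ s) / s
        - Real.log (t / s) ^ (α - 1) * f s (ψ s) / s
        = Real.log (t / s) ^ (α - 1) / s * (f s (φ s) - f s (ψ s)) := by ring
    rw [e4, abs_mul, abs_of_nonneg (div_nonneg hK0 hs0.le)]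
    exact mul_le_mul_of_nonneg_left hfd (div_nonneg hK0 hs0.le)
  set B1 := A * C / Real.Gamma α with hB1def
  have hB1 : 0 < B1 := div_pos (mul_pos hA hC) hΓ
  -- stage 1 single-step estimate
  have step1 : ∀ t ∈ Set.Ioc (1:ℝ) (1 + l), ∀ D : ℝ, 0 ≤ D →
      (∀ s ∈ Set.Ioc (1:ℝ) (1 + l), s ≤ t → Real.log s ^ (1 - γ) * |φ s - ψ s| ≤ D) →
      |φ t - ψ t| ≤ B1 * Real.log t ^ (α + k) * D := by
    intro t ht D hD hW
    have h1t : (1:ℝ) < t := ht.1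
    have hGi : IntegrableOn
        (fun s => A * D * (Real.log (t / s) ^ (α - 1) * Real.log s ^ k / s))
        (Ioo 1 t) volume := ((hCk t h1t).1).const_mul (A * D)
    have hGb : ∀ s ∈ Ioo (1:ℝ) t,
        |Real.log (t / s) ^ (α - 1) * f s (φ s) / s
          - Real.log (t / s) ^ (α - 1) * f s (ψ s) / s|
        ≤ A * D * (Real.log (t / s) ^ (α - 1) * Real.log s ^ k / s) := by
      intro s hs
      have hs1 : s ∈ Set.Ioc (1:ℝ) (1 + l) := ⟨hs.1, le_trans hs.2.le ht.2⟩
      have hs0 : (0:ℝ) < s := lt_trans one_pos hs.1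
      have hts : 1 < t / s := (one_lt_div hs0).2 hs.2
      have hK0 : 0 ≤ Real.log (t / s) ^ (α - 1) := Real.rpow_nonneg (Real.log_pos hts).le _
      have hk0 : 0 ≤ Real.log s ^ k := Real.rpow_nonneg (Real.log_pos hs.1).le _
      calc |Real.log (t / s) ^ (α - 1) * f s (φ s) / s
            - Real.log (t / s) ^ (α - 1) * f s (ψ s) / s|
          ≤ Real.log (t / s) ^ (α - 1) / s *
              (A * Real.log s ^ k * (Real.log s ^ (1 - γ) * |φ s - ψ s|)) :=
            hdiff t ht s hs
        _ ≤ Real.log (t / s) ^ (α - 1) / s * (A * Real.log s ^ k * D) := by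
            apply mul_le_mul_of_nonneg_left _ (div_nonneg hK0 hs0.le)
            exact mul_le_mul_of_nonneg_left (hW s hs1 hs.2.le)
              (mul_nonneg hA.le hk0)
        _ = A * D * (Real.log (t / s) ^ (α - 1) * Real.log s ^ k / s) := by ring
    calc |φ t - ψ t|
        ≤ (1 / Real.Gamma α) *
            ∫ s in Ioo 1 t, A * D * (Real.log (t / s) ^ (α - 1) * Real.log s ^ k / s) :=
          dom t ht _ hGi hGb
      _ = (1 / Real.Gamma α) * (A * D *
            ∫ s in Ioo 1 t, Real.log (t / s) ^ (α - 1) * Real.log s ^ k / s) := by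
          rw [MeasureTheory.integral_const_mul]
      _ ≤ (1 / Real.Gamma α) * (A * D * (C * Real.log t ^ (α + k))) := by
          apply mul_le_mul_of_nonneg_left _ (by positivity)
          exact mul_le_mul_of_nonneg_left (hCk t h1t).2 (mul_nonneg hA.le hD)
      _ = B1 * Real.log t ^ (α + k) * D := by
          rw [hB1def]; field_simp
  -- choice of τ
  set Lτ := min (Real.log (1 + l)) (min 1 ((1 / (2 * B1)) ^ (1 / δ))) with hLτdef
  have hLτ : 0 < Lτ := by
    apply lt_min (Real.log_pos hl1)
    apply lt_min one_pos
    apply Real.rpow_pos_of_pos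
    positivity
  set τ := Real.exp Lτ with hτdef
  have hτ1 : 1 < τ := by
    rw [hτdef, ← Real.exp_zero]
    exact Real.exp_lt_exp.2 hLτ
  have hτl : τ ≤ 1 + l := by
    rw [hτdef, ← Real.exp_log (by linarith : (0:ℝ) < 1 + l)]
    exact Real.exp_le_exp.2 (min_le_left _ _)
  have hlogτ : Real.log τ = Lτ := Real.log_exp Lτ
  have hcontr : ∀ t : ℝ, 1 < t → t ≤ τ → B1 * Real.log t ^ δ ≤ 1 / 2 := by
    intro t h1t htτ
    have hLt : 0 < Real.log t := Real.log_pos h1t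
    have h1 : Real.log t ≤ Lτ := by
      rw [← hlogτ]
      exact Real.log_le_log (by linarith) htτ
    have h2 : Real.log t ^ δ ≤ Lτ ^ δ := Real.rpow_le_rpow hLt.le h1 hδ.le
    have h3 : Lτ ^ δ ≤ ((1 / (2 * B1)) ^ (1 / δ)) ^ δ :=
      Real.rpow_le_rpow hLτ.le (le_trans (min_le_right _ _) (min_le_right _ _)) hδ.le
    have h4 : ((1 / (2 * B1)) ^ (1 / δ)) ^ δ = 1 / (2 * B1) := by
      rw [← Real.rpow_mul (by positivity), one_div_mul_cancel (ne_of_gt hδ), Real.rpow_one]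
    calc B1 * Real.log t ^ δ ≤ B1 * (1 / (2 * B1)) := by
          apply mul_le_mul_of_nonneg_left _ hB1.le
          rw [← h4]
          exact le_trans h2 h3
      _ = 1 / 2 := by field_simp
  -- limit lemma
  have zero_of : ∀ x c : ℝ, 0 ≤ c → (∀ n : ℕ, |x| ≤ c / 2 ^ n) → x = 0 := by
    intro x c hc hn
    have hten : Filter.Tendsto (fun n : ℕ => c / 2 ^ n) atTop (nhds 0) := by
      have := (tendsto_pow_atTop_nhds_zero_of_lt_one (by norm_num : (0:ℝ) ≤ 1/2)
        (by norm_num : (1:ℝ)/2 < 1)).const_mul c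
      simp only [mul_zero] at this
      have hfe : (fun n : ℕ => c / 2 ^ n) = fun n : ℕ => c * (1 / 2 : ℝ) ^ n := by
        funext n
        rw [one_div, inv_pow, ← div_eq_mul_inv]
      rw [hfe]
      exact this
    have : |x| ≤ 0 := ge_of_tendsto hten (Filter.Eventually.of_forall hn)
    exact abs_eq_zero.1 (le_antisymm this (abs_nonneg x))
  -- base weighted bound
  have wbase : ∀ t ∈ Set.Ioc (1:ℝ) (1 + l), Real.log t ^ (1 - γ) * |φ t - ψ t| ≤ 2 * b := by
    intro t ht
    have h1 := hφb t ht
    have h2 := hψb t ht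
    have e : Real.log t ^ (1 - γ) * |φ t - ψ t|
        = |Real.log t ^ (1 - γ) * φ t - Real.log t ^ (1 - γ) * ψ t| := by
      rw [← mul_sub, abs_mul, abs_of_nonneg (Real.rpow_nonneg (Real.log_pos ht.1).le _)]
    rw [e]
    have h3 := abs_sub_le (Real.log t ^ (1 - γ) * φ t) x₀ (Real.log t ^ (1 - γ) * ψ t)
    rw [abs_sub_comm x₀ (Real.log t ^ (1 - γ) * ψ t)] at h3
    linarith
  have iter1 : ∀ n : ℕ, ∀ t ∈ Set.Ioc (1:ℝ) (1 + l), t ≤ τ →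
      Real.log t ^ (1 - γ) * |φ t - ψ t| ≤ 2 * b / 2 ^ n := by
    intro n
    induction n with
    | zero =>
      intro t ht _
      simpa using wbase t ht
    | succ n ih =>
      intro t ht htτ
      have h1t := ht.1
      have hLt := Real.log_pos h1t
      have hD : (0:ℝ) ≤ 2 * b / 2 ^ n := by positivity
      have h5 := step1 t ht (2 * b / 2 ^ n) hD
        (fun s hs hst => ih s hs (le_trans hst htτ))
      calc Real.log t ^ (1 - γ) * |φ t - ψ t|
          ≤ Real.log t ^ (1 - γ) * (B1 * Real.log t ^ (α + k) * (2 * b / 2 ^ n)) :=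
            mul_le_mul_of_nonneg_left h5 (Real.rpow_nonneg hLt.le _)
        _ = B1 * Real.log t ^ δ * (2 * b / 2 ^ n) := by
            rw [show Real.log t ^ (1 - γ) * (B1 * Real.log t ^ (α + k) * (2 * b / 2 ^ n))
              = B1 * (Real.log t ^ (1 - γ) * Real.log t ^ (α + k)) * (2 * b / 2 ^ n) by ring,
              ← Real.rpow_add hLt, show (1 - γ) + (α + k) = δ by rw [hδdef]; ring]
        _ ≤ 1 / 2 * (2 * b / 2 ^ n) := mul_le_mul_of_nonneg_right (hcontr t h1t htτ) hD
        _ = 2 * b / 2 ^ (n + 1) := by rw [pow_succ]; ring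
  have stage1 : ∀ t ∈ Set.Ioc (1:ℝ) (1 + l), t ≤ τ → φ t = ψ t := by
    intro t ht htτ
    have hLt := Real.log_pos ht.1
    have hw : ∀ n : ℕ, |Real.log t ^ (1 - γ) * (φ t - ψ t)| ≤ 2 * b / 2 ^ n := by
      intro n
      rw [abs_mul, abs_of_nonneg (Real.rpow_nonneg hLt.le _)]
      exact iter1 n t ht htτ
    have h0 := zero_of _ (2 * b) (by linarith) hw
    rcases mul_eq_zero.1 h0 with hcase | hcase
    · exact absurd hcase (ne_of_gt (Real.rpow_pos_of_pos hLt _))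
    · exact sub_eq_zero.mp hcase
  -- stage 2 setup
  have trick : ∀ e x lo2 hi2 : ℝ, 0 < lo2 → lo2 ≤ x → x ≤ hi2 →
      x ^ e ≤ lo2 ^ e + hi2 ^ e := by
    intro e x lo2 hi2 h0 hx1 hx2
    rcases le_or_gt 0 e with he | he
    · have h3 : x ^ e ≤ hi2 ^ e := Real.rpow_le_rpow (by linarith) hx2 he
      have h4 : (0:ℝ) ≤ lo2 ^ e := Real.rpow_nonneg h0.le _
      linarith
    · have h3 : x ^ e ≤ lo2 ^ e := Real.rpow_le_rpow_of_nonpos h0 hx1 he.le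
      have h4 : (0:ℝ) ≤ hi2 ^ e := Real.rpow_nonneg (by linarith) _
      linarith
  have hLl : 0 < Real.log (1 + l) := Real.log_pos hl1
  set CT := Lτ ^ (k + 1 - γ) + Real.log (1 + l) ^ (k + 1 - γ) with hCTdef
  have hCT : 0 < CT :=
    add_pos (Real.rpow_pos_of_pos hLτ _) (Real.rpow_pos_of_pos hLl _)
  set D2 := 2 * b * (Lτ ^ (γ - 1) + Real.log (1 + l) ^ (γ - 1)) with hD2def
  have hD2 : 0 < D2 :=
    mul_pos (by linarith)
      (add_pos (Real.rpow_pos_of_pos hLτ _) (Real.rpow_pos_of_pos hLl _))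
  set B2 := A * CT / (Real.Gamma α * α) with hB2def
  have hB2 : 0 < B2 := div_pos (mul_pos hA hCT) (mul_pos hΓ hα0)
  set ε := min 1 ((1 / (2 * B2)) ^ (1 / α)) with hεdef
  have hε : 0 < ε := lt_min one_pos (Real.rpow_pos_of_pos (by positivity) _)
  have hεb : B2 * ε ^ α ≤ 1 / 2 := by
    have h3 : ε ^ α ≤ ((1 / (2 * B2)) ^ (1 / α)) ^ α :=
      Real.rpow_le_rpow hε.le (min_le_right _ _) hα0.le
    have h4 : ((1 / (2 * B2)) ^ (1 / α)) ^ α = 1 / (2 * B2) := by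
      rw [← Real.rpow_mul (by positivity), one_div_mul_cancel (ne_of_gt hα0), Real.rpow_one]
    calc B2 * ε ^ α ≤ B2 * (1 / (2 * B2)) := by
          apply mul_le_mul_of_nonneg_left _ hB2.le
          rw [← h4]; exact h3
      _ = 1 / 2 := by field_simp
  have hD2b : ∀ s ∈ Set.Ioc (1:ℝ) (1 + l), τ ≤ s → |φ s - ψ s| ≤ D2 := by
    intro s hs hτs
    have hLs := Real.log_pos hs.1
    have h1 : Lτ ≤ Real.log s := by
      rw [← hlogτ]
      exact Real.log_le_log (by linarith) hτs
    have h2 : Real.log s ≤ Real.log (1 + l) := Real.log_le_log (by linarith [hs.1]) hs.2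
    have h3 := trick (γ - 1) (Real.log s) Lτ (Real.log (1 + l)) hLτ h1 h2
    have h4 := wbase s hs
    have h5 : |φ s - ψ s| = Real.log s ^ (γ - 1) * (Real.log s ^ (1 - γ) * |φ s - ψ s|) :=
      (cancel s hs.1 _).symm
    rw [h5, hD2def]
    calc Real.log s ^ (γ - 1) * (Real.log s ^ (1 - γ) * |φ s - ψ s|)
        ≤ Real.log s ^ (γ - 1) * (2 * b) :=
          mul_le_mul_of_nonneg_left h4 (Real.rpow_nonneg hLs.le _)
      _ ≤ (Lτ ^ (γ - 1) + Real.log (1 + l) ^ (γ - 1)) * (2 * b) :=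
          mul_le_mul_of_nonneg_right h3 (by linarith)
      _ = 2 * b * (Lτ ^ (γ - 1) + Real.log (1 + l) ^ (γ - 1)) := by ring
  have hCTb : ∀ s : ℝ, τ ≤ s → s ≤ 1 + l → Real.log s ^ (k + 1 - γ) ≤ CT := by
    intro s hτs hsl
    have h1 : Lτ ≤ Real.log s := by
      rw [← hlogτ]
      exact Real.log_le_log (by linarith) hτs
    have h2 : Real.log s ≤ Real.log (1 + l) :=
      Real.log_le_log (by linarith [hτ1]) hsl
    exact trick (k + 1 - γ) (Real.log s) Lτ (Real.log (1 + l)) hLτ h1 h2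
  -- stage 2 step
  have step2 : ∀ σ : ℝ, τ ≤ σ → (∀ s ∈ Set.Ioc (1:ℝ) (1 + l), s ≤ σ → φ s = ψ s) →
      ∀ t ∈ Set.Ioc (1:ℝ) (1 + l), t ≤ σ * Real.exp ε → φ t = ψ t := by
    intro σ hτσ hσeq
    have hσ1 : (1:ℝ) < σ := lt_of_lt_of_le hτ1 hτσ
    have hσ0 : (0:ℝ) < σ := by linarith
    have iter2 : ∀ n : ℕ, ∀ t ∈ Set.Ioc (1:ℝ) (1 + l), t ≤ σ * Real.exp ε →
        |φ t - ψ t| ≤ D2 / 2 ^ n := by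
      intro n
      induction n with
      | zero =>
        intro t ht _
        simp only [pow_zero, div_one]
        rcases le_or_gt t σ with hcs | hcs
        · rw [hσeq t ht hcs]
          simpa using hD2.le
        · exact hD2b t ht (le_of_lt (lt_of_le_of_lt hτσ hcs))
      | succ n ih =>
        intro t ht htσ
        rcases le_or_gt t σ with hcs | hcs
        · rw [hσeq t ht hcs]
          simp only [sub_self, abs_zero]
          positivity
        · have h1t := ht.1
          have hD2n : (0:ℝ) ≤ D2 / 2 ^ n := by positivity
          have hc2 : (0:ℝ) ≤ A * CT * (D2 / 2 ^ n) :=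
            mul_nonneg (mul_nonneg hA.le hCT.le) hD2n
          obtain ⟨hk2i, hk2v⟩ := kern2 α hα0 hα1 σ t hσ1.le hcs
          have hsubσ : Ioo σ t ⊆ Ioo 1 t := fun s hs => ⟨lt_trans hσ1 hs.1, hs.2⟩
          have hG2i : IntegrableOn
              ((Ioo σ t).indicator
                (fun s => A * CT * (D2 / 2 ^ n) * (Real.log (t / s) ^ (α - 1) / s)))
              (Ioo 1 t) volume := by
            rw [IntegrableOn, integrable_indicator_iff measurableSet_Ioo, IntegrableOn,
              Measure.restrict_restrict measurableSet_Ioo,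
              Set.inter_eq_self_of_subset_left hsubσ]
            exact hk2i.const_mul _
          have hG2b : ∀ s ∈ Ioo (1:ℝ) t,
              |Real.log (t / s) ^ (α - 1) * f s (φ s) / s
                - Real.log (t / s) ^ (α - 1) * f s (ψ s) / s|
              ≤ (Ioo σ t).indicator
                  (fun s => A * CT * (D2 / 2 ^ n) * (Real.log (t / s) ^ (α - 1) / s)) s := by
            intro s hs
            rcases le_or_gt s σ with hsc | hsc
            · have heq : φ s = ψ s := hσeq s ⟨hs.1, le_trans hs.2.le ht.2⟩ hsc
              have hnm : s ∉ Ioo σ t := fun hmem => absurd hmem.1 (not_lt.2 hsc)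
              rw [Set.indicator_of_notMem hnm, heq]
              simp
            · have hmem : s ∈ Ioo σ t := ⟨hsc, hs.2⟩
              have hs1' : s ∈ Set.Ioc (1:ℝ) (1 + l) := ⟨hs.1, le_trans hs.2.le ht.2⟩
              have hs0 : (0:ℝ) < s := lt_trans one_pos hs.1
              have hLs := Real.log_pos hs.1
              have hts : 1 < t / s := (one_lt_div hs0).2 hs.2
              have hK0 : 0 ≤ Real.log (t / s) ^ (α - 1) :=
                Real.rpow_nonneg (Real.log_pos hts).le _
              rw [Set.indicator_of_mem hmem]
              have hsle : s ≤ σ * Real.exp ε := le_trans hs.2.le htσ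
              have hwb := ih s hs1' hsle
              have hCTs := hCTb s (le_trans hτσ hsc.le) hs1'.2
              calc |Real.log (t / s) ^ (α - 1) * f s (φ s) / s
                    - Real.log (t / s) ^ (α - 1) * f s (ψ s) / s|
                  ≤ Real.log (t / s) ^ (α - 1) / s *
                      (A * Real.log s ^ k * (Real.log s ^ (1 - γ) * |φ s - ψ s|)) :=
                    hdiff t ht s hs
                _ = Real.log (t / s) ^ (α - 1) / s *
                      (A * Real.log s ^ (k + 1 - γ) * |φ s - ψ s|) := by
                    rw [show A * Real.log s ^ k * (Real.log s ^ (1 - γ) * |φ s - ψ s|)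
                      = A * (Real.log s ^ k * Real.log s ^ (1 - γ)) * |φ s - ψ s| by ring,
                      ← Real.rpow_add hLs, show k + (1 - γ) = k + 1 - γ by ring]
                _ ≤ Real.log (t / s) ^ (α - 1) / s * (A * CT * (D2 / 2 ^ n)) := by
                    apply mul_le_mul_of_nonneg_left _ (div_nonneg hK0 hs0.le)
                    have e5 : A * Real.log s ^ (k + 1 - γ) * |φ s - ψ s|
                        ≤ A * CT * |φ s - ψ s| :=
                      mul_le_mul_of_nonneg_right
                        (mul_le_mul_of_nonneg_left hCTs hA.le) (abs_nonneg _)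
                    have e6 : A * CT * |φ s - ψ s| ≤ A * CT * (D2 / 2 ^ n) :=
                      mul_le_mul_of_nonneg_left hwb (mul_nonneg hA.le hCT.le)
                    exact le_trans e5 e6
                _ = A * CT * (D2 / 2 ^ n) * (Real.log (t / s) ^ (α - 1) / s) := by ring
          have hεα : Real.log (t / σ) ^ α ≤ ε ^ α := by
            apply Real.rpow_le_rpow (Real.log_nonneg ((one_le_div hσ0).2 hcs.le)) _ hα0.le
            rw [Real.log_div (ne_of_gt (lt_trans one_pos h1t)) (ne_of_gt hσ0)]
            have h7 : Real.log t ≤ Real.log (σ * Real.exp ε) :=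
              Real.log_le_log (by linarith) htσ
            rw [Real.log_mul (ne_of_gt hσ0) (ne_of_gt (Real.exp_pos ε)), Real.log_exp] at h7
            linarith
          calc |φ t - ψ t|
              ≤ (1 / Real.Gamma α) * ∫ s in Ioo 1 t,
                  (Ioo σ t).indicator
                    (fun s => A * CT * (D2 / 2 ^ n) * (Real.log (t / s) ^ (α - 1) / s)) s :=
                dom t ht _ hG2i hG2b
            _ = (1 / Real.Gamma α) *
                  (A * CT * (D2 / 2 ^ n) * (Real.log (t / σ) ^ α / α)) := by
                rw [setIntegral_indicator measurableSet_Ioo,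
                  Set.inter_eq_self_of_subset_right hsubσ, MeasureTheory.integral_const_mul, hk2v]
            _ ≤ (1 / Real.Gamma α) * (A * CT * (D2 / 2 ^ n) * (ε ^ α / α)) := by
                apply mul_le_mul_of_nonneg_left _ (by positivity)
                apply mul_le_mul_of_nonneg_left _ hc2
                rw [div_eq_mul_inv, div_eq_mul_inv]
                exact mul_le_mul_of_nonneg_right hεα (inv_nonneg.2 hα0.le)
            _ = B2 * ε ^ α * (D2 / 2 ^ n) := by
                rw [hB2def]; field_simp
            _ ≤ 1 / 2 * (D2 / 2 ^ n) := mul_le_mul_of_nonneg_right hεb hD2n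
            _ = D2 / 2 ^ (n + 1) := by rw [pow_succ]; ring
    intro t ht htσ
    rcases le_or_gt t σ with hcs | hcs
    · exact hσeq t ht hcs
    · exact sub_eq_zero.mp (zero_of (φ t - ψ t) D2 hD2.le (fun n => iter2 n t ht htσ))
  -- conclusion by induction
  have outer : ∀ n : ℕ, ∀ t ∈ Set.Ioc (1:ℝ) (1 + l), t ≤ τ * Real.exp (n * ε) → φ t = ψ t := by
    intro n
    induction n with
    | zero =>
      intro t ht htn
      apply stage1 t ht
      simpa using htn
    | succ n ih =>
      intro t ht htn
      have hτn : τ ≤ τ * Real.exp (n * ε) :=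
        le_mul_of_one_le_right (by linarith) (Real.one_le_exp (by positivity))
      apply step2 (τ * Real.exp (n * ε)) hτn (fun s hs hsle => ih s hs hsle) t ht
      rw [mul_assoc, ← Real.exp_add]
      convert htn using 3
      push_cast
      ring
  intro t ht
  obtain ⟨n, hn⟩ := exists_nat_ge (l / ε)
  have hnε : l ≤ n * ε := by
    rw [div_le_iff₀ hε] at hn
    linarith
  apply outer n t ht
  have h2 : (1:ℝ) + n * ε ≤ Real.exp (n * ε) := by
    have := Real.add_one_le_exp ((n:ℝ) * ε)
    linarith
  have h3 : Real.exp ((n:ℝ) * ε) ≤ τ * Real.exp ((n:ℝ) * ε) :=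
    le_mul_of_one_le_left (Real.exp_pos _).le hτ1.le
  have h4 : t ≤ 1 + l := ht.2
  linarith
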